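/- Let ⦀·⦀ be an orthant-monotonic norm on ℝ^d such that the normed space (ℝ^d, ⦀·⦀⋆) is strictly convex. Then for every k ∈ {0,1,…,d}, the intersection of the level set {x ∈ ℝ^d : ℓ0(x) ≤ k} of the ℓ0 pseudonorm with the dual unit sphere S⋆ = {y : ⦀y⦀⋆ = 1} equals the intersection of the unit ball of the generalized k-support norm with S⋆ (for k = 0 the unit ball of the generalized 0-support norm is understood as {0}, so both sides are empty). -/

import Mathlib

open Finset Set

namespace OSMPaper

variable {d : ℕ}

/-- Standard inner product on `ℝ^d = Fin d → ℝ`. -/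
def dot (x y : Fin d → ℝ) : ℝ := ∑ i, x i * y i

/-- `N` is a norm on `ℝ^d`. -/
def IsNorm (N : (Fin d → ℝ) → ℝ) : Prop :=
  (∀ x, 0 ≤ N x) ∧ (∀ x, N x = 0 ↔ x = 0) ∧
  (∀ (c : ℝ) (x : Fin d → ℝ), N (c • x) = |c| * N x) ∧
  (∀ x y, N (x + y) ≤ N x + N y)

/-- `proj K x = x_K`, the vector coinciding with `x` on `K` and zero outside `K`. -/
def proj (K : Finset (Fin d)) (x : Fin d → ℝ) : Fin d → ℝ :=
  fun i => if i ∈ K then x i else 0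

/-- The coordinate subspace `ℝ_K`. -/
def coordSubspace (K : Finset (Fin d)) : Set (Fin d → ℝ) :=
  {x | ∀ j, j ∉ K → x j = 0}

/-- Orthant-monotonic norm. -/
def OrthantMonotonic (N : (Fin d → ℝ) → ℝ) : Prop :=
  ∀ x x' : Fin d → ℝ, (∀ i, |x i| ≤ |x' i|) → (∀ i, 0 ≤ x i * x' i) → N x ≤ N x'

/-- Orthant-strictly monotonic norm. -/
def OrthantStrictlyMonotonic (N : (Fin d → ℝ) → ℝ) : Prop :=
  ∀ x x' : Fin d → ℝ, (∀ i, |x i| ≤ |x' i|) → (∃ j, |x j| < |x' j|) →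
    (∀ i, 0 ≤ x i * x' i) → N x < N x'

/-- Dual norm `⦀y⦀⋆ = sup_{N x ≤ 1} ⟨x, y⟩`. -/
noncomputable def dualNorm (N : (Fin d → ℝ) → ℝ) (y : Fin d → ℝ) : ℝ :=
  sSup {r | ∃ x, N x ≤ 1 ∧ r = dot x y}

/-- Support function of a set `S`. -/
noncomputable def suppFn (S : Set (Fin d → ℝ)) (y : Fin d → ℝ) : ℝ :=
  sSup {r | ∃ x ∈ S, r = dot x y}

/-- Generalized top-`k` norm associated with the source norm `N`. -/
noncomputable def topNorm (N : (Fin d → ℝ) → ℝ) (k : ℕ) (x : Fin d → ℝ) : ℝ :=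
  sSup {r | ∃ K : Finset (Fin d), K.card ≤ k ∧ r = N (proj K x)}

/-- Generalized `k`-support norm: the dual norm of the generalized top-`k` norm. -/
noncomputable def supportNorm (N : (Fin d → ℝ) → ℝ) (k : ℕ) : (Fin d → ℝ) → ℝ :=
  dualNorm (topNorm N k)

/-- The ℓ0 pseudonorm: the number of nonzero components. -/
noncomputable def l0 (x : Fin d → ℝ) : ℕ := Set.ncard {i | x i ≠ 0}

/-- `x` is an extreme point of the convex set `C`. -/
def ExtremePt (C : Set (Fin d → ℝ)) (x : Fin d → ℝ) : Prop :=
  x ∈ C ∧ ∀ y ∈ C, ∀ z ∈ C, ∀ t : ℝ, 0 < t → t < 1 →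
    x = t • y + (1 - t) • z → y = x ∧ z = x

-- ### dot lemmas

lemma dot_comm (x y : Fin d → ℝ) : dot x y = dot y x :=
  Finset.sum_congr rfl fun i _ => mul_comm _ _

lemma dot_zero_left (y : Fin d → ℝ) : dot 0 y = 0 := by simp [dot]

lemma dot_zero_right (x : Fin d → ℝ) : dot x 0 = 0 := by simp [dot]

lemma dot_smul_left (c : ℝ) (x y : Fin d → ℝ) : dot (c • x) y = c * dot x y := by
  simp [dot, Finset.mul_sum, mul_assoc]

lemma dot_smul_right (c : ℝ) (x y : Fin d → ℝ) : dot x (c • y) = c * dot x y := by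
  simp only [dot, Pi.smul_apply, smul_eq_mul, Finset.mul_sum]
  exact Finset.sum_congr rfl fun i _ => by ring

lemma dot_add_right (x a b : Fin d → ℝ) : dot x (a + b) = dot x a + dot x b := by
  simp only [dot, Pi.add_apply, mul_add, Finset.sum_add_distrib]

lemma dot_single_left (i : Fin d) (y : Fin d → ℝ) : dot (Pi.single i 1) y = y i := by
  simp [dot, Pi.single_apply]

lemma dot_left_proj {K : Finset (Fin d)} {z : Fin d → ℝ} (hz : z ∈ coordSubspace K)
    (x : Fin d → ℝ) : dot x z = dot (proj K x) z := by
  refine Finset.sum_congr rfl fun i _ => ?_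
  by_cases h : i ∈ K
  · simp [proj, h]
  · simp [proj, h, hz i h]

lemma dot_proj_right {K : Finset (Fin d)} {v : Fin d → ℝ} (hv : v ∈ coordSubspace K)
    (w : Fin d → ℝ) : dot v (proj K w) = dot v w := by
  refine Finset.sum_congr rfl fun i _ => ?_
  by_cases h : i ∈ K
  · simp [proj, h]
  · simp [proj, h, hv i h]

-- ### proj lemmas

lemma proj_empty (x : Fin d → ℝ) : proj ∅ x = 0 := by
  funext i; simp [proj]

lemma proj_zero (K : Finset (Fin d)) : proj K (0 : Fin d → ℝ) = 0 := by
  funext i; simp [proj]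

lemma proj_smul (K : Finset (Fin d)) (c : ℝ) (x : Fin d → ℝ) :
    proj K (c • x) = c • proj K x := by
  funext i; by_cases h : i ∈ K <;> simp [proj, h]

lemma proj_add (K : Finset (Fin d)) (x y : Fin d → ℝ) :
    proj K (x + y) = proj K x + proj K y := by
  funext i; by_cases h : i ∈ K <;> simp [proj, h]

lemma proj_mem_coordSubspace (K : Finset (Fin d)) (x : Fin d → ℝ) :
    proj K x ∈ coordSubspace K := by
  intro j hj; simp [proj, hj]

lemma proj_singleton (i : Fin d) (x : Fin d → ℝ) :
    proj {i} x = x i • (Pi.single i 1 : Fin d → ℝ) := by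
  funext j
  by_cases h : j = i
  · subst h; simp [proj]
  · simp [proj, h, Pi.single_apply]

-- ### norm lemmas

lemma IsNorm.zero {N : (Fin d → ℝ) → ℝ} (hN : IsNorm N) : N 0 = 0 :=
  (hN.2.1 0).2 rfl

lemma IsNorm.neg {N : (Fin d → ℝ) → ℝ} (hN : IsNorm N) (x : Fin d → ℝ) : N (-x) = N x := by
  have := hN.2.2.1 (-1) x
  simpa using this

lemma IsNorm.pos {N : (Fin d → ℝ) → ℝ} (hN : IsNorm N) {x : Fin d → ℝ} (hx : x ≠ 0) :
    0 < N x := by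
  rcases lt_or_eq_of_le (hN.1 x) with h | h
  · exact h
  · exact absurd ((hN.2.1 x).1 h.symm) hx

lemma single_ne_zero' (i : Fin d) : (Pi.single i 1 : Fin d → ℝ) ≠ 0 := by
  intro h
  have := congrFun h i
  simp at this

lemma IsNorm.single_pos {N : (Fin d → ℝ) → ℝ} (hN : IsNorm N) (i : Fin d) :
    0 < N (Pi.single i 1) := hN.pos (single_ne_zero' i)

/-- orthant-monotonicity gives `N (proj K x) ≤ N x`. -/
lemma OrthantMonotonic.proj_le {N : (Fin d → ℝ) → ℝ} (hom : OrthantMonotonic N)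
    (K : Finset (Fin d)) (x : Fin d → ℝ) : N (proj K x) ≤ N x := by
  refine hom _ _ (fun i => ?_) (fun i => ?_)
  · by_cases h : i ∈ K <;> simp [proj, h, abs_nonneg]
  · by_cases h : i ∈ K <;> simp [proj, h, mul_self_nonneg]

/-- coordinate bound for orthant-monotonic norms -/
lemma coord_bound {N : (Fin d → ℝ) → ℝ} (hN : IsNorm N) (hom : OrthantMonotonic N)
    (x : Fin d → ℝ) (i : Fin d) : |x i| * N (Pi.single i 1) ≤ N x := by
  have h1 : N (proj {i} x) ≤ N x := hom.proj_le {i} x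
  rwa [proj_singleton, hN.2.2.1] at h1


-- ### dual norm generic lemmas

lemma dual_zero_mem {N : (Fin d → ℝ) → ℝ} (hN : IsNorm N) (y : Fin d → ℝ) :
    (0 : ℝ) ∈ {r | ∃ x, N x ≤ 1 ∧ r = dot x y} :=
  ⟨0, by rw [hN.zero]; norm_num, (dot_zero_left y).symm⟩

lemma dual_bddAbove {N : (Fin d → ℝ) → ℝ} (hN : IsNorm N) (hom : OrthantMonotonic N)
    (y : Fin d → ℝ) : BddAbove {r | ∃ x, N x ≤ 1 ∧ r = dot x y} := by
  refine ⟨∑ i, (N (Pi.single i 1))⁻¹ * |y i|, ?_⟩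
  rintro r ⟨x, hx, rfl⟩
  calc dot x y ≤ ∑ i, |x i| * |y i| := by
        refine Finset.sum_le_sum fun i _ => ?_
        calc x i * y i ≤ |x i * y i| := le_abs_self _
        _ = |x i| * |y i| := abs_mul _ _
    _ ≤ ∑ i, (N (Pi.single i 1))⁻¹ * |y i| := by
        refine Finset.sum_le_sum fun i _ => ?_
        refine mul_le_mul_of_nonneg_right ?_ (abs_nonneg _)
        have hs := hN.single_pos i
        have hb := (coord_bound hN hom x i).trans hx
        rw [inv_eq_one_div, le_div_iff₀ hs]
        exact hb

lemma dualNorm_nonneg {N : (Fin d → ℝ) → ℝ} (hN : IsNorm N) (hom : OrthantMonotonic N)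
    (y : Fin d → ℝ) : 0 ≤ dualNorm N y :=
  le_csSup (dual_bddAbove hN hom y) (dual_zero_mem hN y)

lemma dot_le_dualNorm {N : (Fin d → ℝ) → ℝ} (hN : IsNorm N) (hom : OrthantMonotonic N)
    {x : Fin d → ℝ} (y : Fin d → ℝ) (hx : N x ≤ 1) : dot x y ≤ dualNorm N y :=
  le_csSup (dual_bddAbove hN hom y) ⟨x, hx, rfl⟩

/-- generalized Cauchy-Schwarz -/
lemma dot_le_mul_dualNorm {N : (Fin d → ℝ) → ℝ} (hN : IsNorm N) (hom : OrthantMonotonic N)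
    (x y : Fin d → ℝ) : dot x y ≤ N x * dualNorm N y := by
  by_cases hx : x = 0
  · subst hx
    rw [dot_zero_left, hN.zero, zero_mul]
  · have hpos := hN.pos hx
    have h1 : N ((N x)⁻¹ • x) ≤ 1 := by
      rw [hN.2.2.1, abs_of_pos (inv_pos.2 hpos), inv_mul_cancel₀ hpos.ne']
    have h2 := dot_le_dualNorm hN hom y h1
    rw [dot_smul_left] at h2
    calc dot x y = N x * ((N x)⁻¹ * dot x y) := by field_simp
    _ ≤ N x * dualNorm N y := mul_le_mul_of_nonneg_left h2 hpos.le

lemma dualNorm_le_iff {N : (Fin d → ℝ) → ℝ} (hN : IsNorm N) (hom : OrthantMonotonic N)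
    {y : Fin d → ℝ} {c : ℝ} (hc : 0 ≤ c) :
    dualNorm N y ≤ c ↔ ∀ x, N x ≤ 1 → dot x y ≤ c := by
  constructor
  · intro h x hx
    exact (dot_le_dualNorm hN hom y hx).trans h
  · intro h
    exact Real.sSup_le (by rintro r ⟨x, hx, rfl⟩; exact h x hx) hc

lemma dualNorm_zero {N : (Fin d → ℝ) → ℝ} (hN : IsNorm N) : dualNorm N 0 = 0 := by
  have : {r | ∃ x, N x ≤ 1 ∧ r = dot x (0 : Fin d → ℝ)} = {0} := by
    ext r
    simp only [Set.mem_setOf_eq, Set.mem_singleton_iff]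
    constructor
    · rintro ⟨x, _, rfl⟩; exact dot_zero_right x
    · rintro rfl; exact ⟨0, by rw [hN.zero]; norm_num, (dot_zero_right 0).symm⟩
  rw [dualNorm, this, csSup_singleton]


-- ### topNorm lemmas

lemma topSet_bddAbove (N : (Fin d → ℝ) → ℝ) (k : ℕ) (x : Fin d → ℝ) :
    BddAbove {r | ∃ K : Finset (Fin d), K.card ≤ k ∧ r = N (proj K x)} := by
  have hfin : {r | ∃ K : Finset (Fin d), K.card ≤ k ∧ r = N (proj K x)}.Finite := by
    have : {r | ∃ K : Finset (Fin d), K.card ≤ k ∧ r = N (proj K x)} ⊆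
        (fun K : Finset (Fin d) => N (proj K x)) '' Set.univ := by
      rintro r ⟨K, _, rfl⟩; exact ⟨K, trivial, rfl⟩
    exact (Set.finite_univ.image _).subset this
  exact hfin.bddAbove

lemma le_topNorm {N : (Fin d → ℝ) → ℝ} {k : ℕ} {K : Finset (Fin d)} (hK : K.card ≤ k)
    (x : Fin d → ℝ) : N (proj K x) ≤ topNorm N k x :=
  le_csSup (topSet_bddAbove N k x) ⟨K, hK, rfl⟩

lemma topNorm_nonneg {N : (Fin d → ℝ) → ℝ} (hN : IsNorm N) (k : ℕ) (x : Fin d → ℝ) :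
    0 ≤ topNorm N k x := by
  have h := le_topNorm (K := ∅) (N := N) (k := k) (by simp) x
  rwa [proj_empty, hN.zero] at h

lemma topNorm_le {N : (Fin d → ℝ) → ℝ} {k : ℕ} {x : Fin d → ℝ} {c : ℝ} (hc : 0 ≤ c)
    (h : ∀ K : Finset (Fin d), K.card ≤ k → N (proj K x) ≤ c) : topNorm N k x ≤ c :=
  Real.sSup_le (by rintro r ⟨K, hK, rfl⟩; exact h K hK) hc

lemma topNorm_zero {N : (Fin d → ℝ) → ℝ} (hN : IsNorm N) (k : ℕ) :
    topNorm N k (0 : Fin d → ℝ) = 0 :=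
  le_antisymm (topNorm_le le_rfl fun K _ => by rw [proj_zero, hN.zero]) (topNorm_nonneg hN k 0)

lemma topNorm_smul {N : (Fin d → ℝ) → ℝ} (hN : IsNorm N) (k : ℕ) (c : ℝ) (x : Fin d → ℝ) :
    topNorm N k (c • x) = |c| * topNorm N k x := by
  have key : ∀ (a : ℝ) (z : Fin d → ℝ), topNorm N k (a • z) ≤ |a| * topNorm N k z := by
    intro a z
    refine topNorm_le (mul_nonneg (abs_nonneg a) (topNorm_nonneg hN k z)) fun K hK => ?_
    rw [proj_smul, hN.2.2.1]
    exact mul_le_mul_of_nonneg_left (le_topNorm hK z) (abs_nonneg a)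
  by_cases hc : c = 0
  · subst hc; simp [topNorm_zero hN]
  · refine le_antisymm (key c x) ?_
    have h2 := key c⁻¹ (c • x)
    rw [inv_smul_smul₀ hc, abs_inv] at h2
    have habs : 0 < |c| := abs_pos.2 hc
    calc |c| * topNorm N k x ≤ |c| * (|c|⁻¹ * topNorm N k (c • x)) :=
          mul_le_mul_of_nonneg_left h2 habs.le
    _ = topNorm N k (c • x) := by field_simp

lemma topNorm_isNorm {N : (Fin d → ℝ) → ℝ} (hN : IsNorm N) {k : ℕ} (hk : 1 ≤ k) :
    IsNorm (topNorm N k) := by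
  refine ⟨topNorm_nonneg hN k, fun x => ⟨fun h => ?_, fun h => by rw [h, topNorm_zero hN]⟩,
    topNorm_smul hN k, fun x y => ?_⟩
  · funext i
    have h1 : N (proj {i} x) ≤ 0 := h ▸ le_topNorm (by simpa using hk) x
    have h2 : proj {i} x = 0 := (hN.2.1 _).1 (le_antisymm h1 (hN.1 _))
    have := congrFun h2 i
    simpa [proj] using this
  · refine topNorm_le (add_nonneg (topNorm_nonneg hN k x) (topNorm_nonneg hN k y))
      fun K hK => ?_
    rw [proj_add]
    exact (hN.2.2.2 _ _).trans (add_le_add (le_topNorm hK x) (le_topNorm hK y))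

lemma topNorm_om {N : (Fin d → ℝ) → ℝ} (hN : IsNorm N) (hom : OrthantMonotonic N) (k : ℕ) :
    OrthantMonotonic (topNorm N k) := by
  intro x x' habs hsgn
  refine topNorm_le (topNorm_nonneg hN k x') fun K hK => ?_
  refine le_trans (hom (proj K x) (proj K x') (fun i => ?_) (fun i => ?_)) (le_topNorm hK x')
  · by_cases h : i ∈ K <;> simp [proj, h, habs i, abs_nonneg]
  · by_cases h : i ∈ K <;> simp [proj, h, hsgn i]

lemma topNorm_le_self {N : (Fin d → ℝ) → ℝ} (hN : IsNorm N) (hom : OrthantMonotonic N)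
    (k : ℕ) (x : Fin d → ℝ) : topNorm N k x ≤ N x :=
  topNorm_le (hN.1 x) fun K _ => hom.proj_le K x


-- ### continuity and topology

lemma isnorm_sum_le {N : (Fin d → ℝ) → ℝ} (hN : IsNorm N) {ι : Type*} (s : Finset ι)
    (f : ι → (Fin d → ℝ)) : N (∑ i ∈ s, f i) ≤ ∑ i ∈ s, N (f i) := by
  classical
  induction s using Finset.induction_on with
  | empty => simp [hN.zero]
  | insert _ _ hns ih =>
    rw [Finset.sum_insert hns, Finset.sum_insert hns]
    exact (hN.2.2.2 _ _).trans (add_le_add_right ih _)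

lemma isnorm_le_sum {N : (Fin d → ℝ) → ℝ} (hN : IsNorm N) (z : Fin d → ℝ) :
    N z ≤ ∑ i, |z i| * N (Pi.single i 1) := by
  have hz : z = ∑ i, z i • (Pi.single i 1 : Fin d → ℝ) := by
    have := Finset.univ_sum_single z
    rw [← this]
    refine Finset.sum_congr rfl fun i _ => ?_
    funext j
    by_cases h : j = i
    · subst h; simp
    · simp [Pi.single_apply, h]
  calc N z = N (∑ i, z i • (Pi.single i 1 : Fin d → ℝ)) := by rw [← hz]
  _ ≤ ∑ i, N (z i • (Pi.single i 1 : Fin d → ℝ)) := isnorm_sum_le hN _ _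
  _ = ∑ i, |z i| * N (Pi.single i 1) := by simp [hN.2.2.1]

lemma isnorm_continuous {N : (Fin d → ℝ) → ℝ} (hN : IsNorm N) : Continuous N := by
  set C : ℝ := ∑ i : Fin d, N (Pi.single i 1) with hC
  have hC0 : 0 ≤ C := Finset.sum_nonneg fun i _ => hN.1 _
  have key : ∀ x y : Fin d → ℝ, N x - N y ≤ C * ‖x - y‖ := by
    intro x y
    have h1 : N x ≤ N (x - y) + N y := by
      have := hN.2.2.2 (x - y) y
      simpa using this
    have h2 : N (x - y) ≤ C * ‖x - y‖ := by
      calc N (x - y) ≤ ∑ i, |(x - y) i| * N (Pi.single i 1) := isnorm_le_sum hN _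
      _ ≤ ∑ i, ‖x - y‖ * N (Pi.single i 1) := by
          refine Finset.sum_le_sum fun i _ => ?_
          refine mul_le_mul_of_nonneg_right ?_ (hN.1 _)
          have := norm_le_pi_norm (x - y) i
          simpa using this
      _ = C * ‖x - y‖ := by rw [hC, Finset.sum_mul]; exact Finset.sum_congr rfl fun i _ => by ring
    linarith
  have : LipschitzWith (Real.toNNReal C) N := by
    refine LipschitzWith.of_dist_le_mul fun x y => ?_
    rw [Real.dist_eq, dist_eq_norm]
    have h1 := key x y
    have h2 := key y x
    rw [norm_sub_rev] at h2
    rw [abs_le]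
    constructor
    · rw [Real.coe_toNNReal C hC0]; linarith
    · rw [Real.coe_toNNReal C hC0]; linarith
  exact this.continuous

lemma ball_closed {N : (Fin d → ℝ) → ℝ} (hN : IsNorm N) :
    IsClosed {x : Fin d → ℝ | N x ≤ 1} :=
  isClosed_le (isnorm_continuous hN) continuous_const

lemma ball_convex {N : (Fin d → ℝ) → ℝ} (hN : IsNorm N) :
    Convex ℝ {x : Fin d → ℝ | N x ≤ 1} := by
  intro a ha b hb p q hp hq hpq
  simp only [Set.mem_setOf_eq] at *
  calc N (p • a + q • b) ≤ N (p • a) + N (q • b) := hN.2.2.2 _ _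
  _ = p * N a + q * N b := by rw [hN.2.2.1, hN.2.2.1, abs_of_nonneg hp, abs_of_nonneg hq]
  _ ≤ p * 1 + q * 1 := add_le_add (mul_le_mul_of_nonneg_left ha hp)
      (mul_le_mul_of_nonneg_left hb hq)
  _ = 1 := by linarith

lemma coordSubspace_closed (K : Finset (Fin d)) : IsClosed (coordSubspace K) := by
  have : coordSubspace K = ⋂ j ∈ {j : Fin d | j ∉ K}, {x : Fin d → ℝ | x j = 0} := by
    ext x
    simp [coordSubspace, Set.mem_iInter]
  rw [this]
  exact isClosed_biInter fun j _ => isClosed_eq (continuous_apply j) continuous_const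

lemma coordSubspace_convex (K : Finset (Fin d)) : Convex ℝ (coordSubspace K) := by
  intro a ha b hb p q _ _ _
  intro j hj
  simp [ha j hj, hb j hj]

lemma dot_continuous_right (x : Fin d → ℝ) : Continuous fun y => dot x y := by
  refine continuous_finset_sum _ fun i _ => ?_
  exact continuous_const.mul (continuous_apply i)

lemma dualBall_closed {N : (Fin d → ℝ) → ℝ} (hN : IsNorm N) (hom : OrthantMonotonic N) :
    IsClosed {y : Fin d → ℝ | dualNorm N y ≤ 1} := by
  have : {y : Fin d → ℝ | dualNorm N y ≤ 1} =
      ⋂ x ∈ {x : Fin d → ℝ | N x ≤ 1}, {y | dot x y ≤ 1} := by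
    ext y
    simp only [Set.mem_setOf_eq, Set.mem_iInter]
    exact dualNorm_le_iff hN hom zero_le_one
  rw [this]
  exact isClosed_biInter fun x _ => isClosed_le (dot_continuous_right x) continuous_const

lemma dualBall_convex {N : (Fin d → ℝ) → ℝ} (hN : IsNorm N) (hom : OrthantMonotonic N) :
    Convex ℝ {y : Fin d → ℝ | dualNorm N y ≤ 1} := by
  intro a ha b hb p q hp hq hpq
  simp only [Set.mem_setOf_eq] at *
  rw [dualNorm_le_iff hN hom zero_le_one] at ha hb ⊢
  intro x hx
  rw [dot_add_right, dot_smul_right, dot_smul_right]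
  have h1 := mul_le_mul_of_nonneg_left (ha x hx) hp
  have h2 := mul_le_mul_of_nonneg_left (hb x hx) hq
  linarith

lemma dualBall_compact {N : (Fin d → ℝ) → ℝ} (hN : IsNorm N) (hom : OrthantMonotonic N) :
    IsCompact {y : Fin d → ℝ | dualNorm N y ≤ 1} := by
  rw [Metric.isCompact_iff_isClosed_bounded]
  refine ⟨dualBall_closed hN hom, ?_⟩
  rw [Metric.isBounded_iff_subset_closedBall 0]
  set C : ℝ := ∑ i : Fin d, N (Pi.single i 1) with hC
  have hC0 : 0 ≤ C := Finset.sum_nonneg fun i _ => hN.1 _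
  refine ⟨C, fun y hy => ?_⟩
  simp only [Set.mem_setOf_eq] at hy
  rw [Metric.mem_closedBall, dist_zero_right]
  rw [pi_norm_le_iff_of_nonneg hC0]
  intro i
  have hsp := hN.single_pos i
  have key : ∀ ε : ℝ, |ε| = 1 → ε * y i ≤ N (Pi.single i 1) := by
    intro ε hε
    have hx : N ((ε * (N (Pi.single i 1))⁻¹) • (Pi.single i 1 : Fin d → ℝ)) ≤ 1 := by
      rw [hN.2.2.1, abs_mul, hε, abs_inv, abs_of_pos hsp, one_mul,
        inv_mul_cancel₀ hsp.ne']
    have h2 := (dot_le_dualNorm hN hom y hx).trans hy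
    rw [dot_smul_left, dot_single_left] at h2
    have h3 : ε * y i * (N (Pi.single i 1))⁻¹ ≤ 1 := by
      calc ε * y i * (N (Pi.single i 1))⁻¹ = ε * (N (Pi.single i 1))⁻¹ * y i := by ring
      _ ≤ 1 := h2
    calc ε * y i = (ε * y i * (N (Pi.single i 1))⁻¹) * N (Pi.single i 1) := by field_simp
    _ ≤ 1 * N (Pi.single i 1) := mul_le_mul_of_nonneg_right h3 hsp.le
    _ = N (Pi.single i 1) := one_mul _
  have hsingle_le : N (Pi.single i 1) ≤ C := by
    rw [hC]
    exact Finset.single_le_sum (f := fun j : Fin d => N (Pi.single j 1)) (fun j _ => hN.1 _) (Finset.mem_univ i)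
  have h1 := key 1 (by norm_num)
  have h2 := key (-1) (by norm_num)
  rw [one_mul] at h1
  rw [neg_one_mul] at h2
  rw [Real.norm_eq_abs, abs_le]
  constructor <;> linarith


-- ### subspace duality

lemma dualNorm_le_one_of_coord {N : (Fin d → ℝ) → ℝ} (hN : IsNorm N)
    (hom : OrthantMonotonic N) {K : Finset (Fin d)} {z : Fin d → ℝ}
    (hz : z ∈ coordSubspace K)
    (h : ∀ v ∈ coordSubspace K, N v ≤ 1 → dot v z ≤ 1) : dualNorm N z ≤ 1 := by
  rw [dualNorm_le_iff hN hom zero_le_one]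
  intro x hx
  rw [dot_left_proj hz x]
  exact h (proj K x) (proj_mem_coordSubspace K x) ((hom.proj_le K x).trans hx)

lemma clm_eq_dot (f : (Fin d → ℝ) →L[ℝ] ℝ) (x : Fin d → ℝ) :
    f x = dot x (fun i => f (Pi.single i 1)) := by
  have hx : x = ∑ i, x i • (Pi.single i 1 : Fin d → ℝ) := by
    have := Finset.univ_sum_single x
    rw [← this]
    refine Finset.sum_congr rfl fun i _ => ?_
    funext j
    by_cases h : j = i
    · subst h; simp
    · simp [Pi.single_apply, h]
  conv_lhs => rw [hx]
  rw [map_sum]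
  refine Finset.sum_congr rfl fun i _ => ?_
  rw [map_smul]
  simp

/-- biduality within a coordinate subspace -/
lemma exists_dual_vector_coord {N : (Fin d → ℝ) → ℝ} (hN : IsNorm N)
    (hom : OrthantMonotonic N) {K : Finset (Fin d)} {u : Fin d → ℝ}
    (hu : u ∈ coordSubspace K) (h1 : 1 < N u) :
    ∃ z ∈ coordSubspace K, dualNorm N z ≤ 1 ∧ 1 < dot u z := by
  set s : Set (Fin d → ℝ) := coordSubspace K ∩ {v | N v ≤ 1} with hs
  have hconv : Convex ℝ s := (coordSubspace_convex K).inter (ball_convex hN)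
  have hclosed : IsClosed s := (coordSubspace_closed K).inter (ball_closed hN)
  have hu_not : u ∉ s := fun hmem => absurd hmem.2 (not_le.2 h1)
  obtain ⟨f, c, hfs, hfu⟩ := geometric_hahn_banach_closed_point hconv hclosed hu_not
  set w : Fin d → ℝ := fun i => f (Pi.single i 1) with hw
  have hfw : ∀ x, f x = dot x w := fun x => clm_eq_dot f x
  have hc : 0 < c := by
    have h0 : (0 : Fin d → ℝ) ∈ s := ⟨fun j _ => rfl, by simp [hN.zero]⟩
    have := hfs 0 h0
    simpa using this
  have hmem : c⁻¹ • proj K w ∈ coordSubspace K := by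
    intro j hj
    simp [proj, hj]
  refine ⟨c⁻¹ • proj K w, hmem, ?_, ?_⟩
  · refine dualNorm_le_one_of_coord hN hom hmem ?_
    intro v hv hNv
    rw [dot_smul_right, dot_proj_right hv]
    have := hfs v ⟨hv, hNv⟩
    rw [hfw] at this
    calc c⁻¹ * dot v w ≤ c⁻¹ * c := mul_le_mul_of_nonneg_left this.le (inv_pos.2 hc).le
    _ = 1 := inv_mul_cancel₀ hc.ne'
  · have huw : dot u (proj K w) = dot u w := dot_proj_right hu w
    rw [dot_smul_right, huw]
    rw [hfw] at hfu
    calc (1 : ℝ) = c⁻¹ * c := (inv_mul_cancel₀ hc.ne').symm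
    _ < c⁻¹ * dot u w := by
        exact mul_lt_mul_of_pos_left hfu (inv_pos.2 hc)

/-- the support function of the dual ball intersected with a coordinate subspace
dominates `N ∘ proj K`. -/
lemma proj_norm_le_of_dual_bound {N : (Fin d → ℝ) → ℝ} (hN : IsNorm N)
    (hom : OrthantMonotonic N) (K : Finset (Fin d)) (x : Fin d → ℝ) {c : ℝ} (hc : 0 < c)
    (h : ∀ z ∈ {z : Fin d → ℝ | dualNorm N z ≤ 1} ∩ coordSubspace K, dot x z ≤ c) :
    N (proj K x) ≤ c := by
  by_contra hlt
  push_neg at hlt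
  set u : Fin d → ℝ := c⁻¹ • proj K x with hu
  have humem : u ∈ coordSubspace K := by
    intro j hj; simp [hu, proj, hj]
  have hNu : 1 < N u := by
    rw [hu, hN.2.2.1, abs_inv, abs_of_pos hc]
    rw [lt_inv_mul_iff₀ hc]
    simpa using hlt
  obtain ⟨z, hzK, hz1, hz2⟩ := exists_dual_vector_coord hN hom humem hNu
  have hxz := h z ⟨hz1, hzK⟩
  rw [hu, dot_smul_left, ← dot_left_proj hzK x] at hz2
  have : c < dot x z := by
    calc c = c * 1 := (mul_one c).symm
    _ < c * (c⁻¹ * dot x z) := mul_lt_mul_of_pos_left hz2 hc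
    _ = dot x z := by field_simp
  linarith


-- ### compactness of convex hulls

lemma isCompact_convexJoin {s t : Set (Fin d → ℝ)} (hs : IsCompact s) (ht : IsCompact t) :
    IsCompact (convexJoin ℝ s t) := by
  have heq : convexJoin ℝ s t =
      (fun p : ℝ × ((Fin d → ℝ) × (Fin d → ℝ)) => p.1 • p.2.1 + (1 - p.1) • p.2.2) ''
        (Set.Icc (0:ℝ) 1 ×ˢ (s ×ˢ t)) := by
    ext z
    rw [mem_convexJoin]
    constructor
    · rintro ⟨a, ha, b, hb, p, q, hp, hq, hpq, rfl⟩
      refine ⟨(p, a, b), ⟨⟨hp, by linarith⟩, ha, hb⟩, ?_⟩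
      simp only
      rw [show (1 : ℝ) - p = q by linarith]
    · rintro ⟨⟨p, a, b⟩, ⟨⟨hp0, hp1⟩, ha, hb⟩, rfl⟩
      exact ⟨a, ha, b, hb, p, 1 - p, hp0, by linarith, by ring, rfl⟩
  rw [heq]
  refine (isCompact_Icc.prod (hs.prod ht)).image ?_
  exact (continuous_fst.smul (continuous_fst.comp continuous_snd)).add
    ((continuous_const.sub continuous_fst).smul (continuous_snd.comp continuous_snd))

lemma isCompact_convexHull_biUnion {ι : Type*} [DecidableEq ι] (𝒦 : Finset ι)
    (S : ι → Set (Fin d → ℝ)) (hc : ∀ i, IsCompact (S i)) (hv : ∀ i, Convex ℝ (S i))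
    (hne : ∀ i, (S i).Nonempty) :
    IsCompact (convexHull ℝ (⋃ i ∈ (𝒦 : Set ι), S i)) := by
  induction 𝒦 using Finset.induction_on with
  | empty => simp
  | @insert a s ha ih =>
    have hins : (⋃ i ∈ ((insert a s : Finset ι) : Set ι), S i) =
        S a ∪ ⋃ i ∈ (s : Set ι), S i := by
      simp [Set.biUnion_insert]
    rw [hins]
    rcases s.eq_empty_or_nonempty with rfl | hs
    · simp only [Finset.coe_empty, Set.mem_empty_iff_false, Set.iUnion_of_empty,
        Set.iUnion_empty, Set.union_empty]
      rw [(hv a).convexHull_eq]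
      exact hc a
    · obtain ⟨i0, hi0⟩ := hs
      have hUne : (⋃ i ∈ (s : Set ι), S i).Nonempty := by
        obtain ⟨p, hp⟩ := hne i0
        exact ⟨p, Set.mem_biUnion hi0 hp⟩
      rw [convexHull_union (hne a) hUne, (hv a).convexHull_eq]
      exact isCompact_convexJoin (hc a) ih


-- ### the two main directions

lemma supportNorm_le_of_l0 {N : (Fin d → ℝ) → ℝ} (hN : IsNorm N) (hom : OrthantMonotonic N)
    {k : ℕ} {y : Fin d → ℝ} (hl0 : l0 y ≤ k) (hdual : dualNorm N y = 1) :
    supportNorm N k y ≤ 1 := by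
  classical
  refine Real.sSup_le ?_ zero_le_one
  rintro r ⟨x, hx, rfl⟩
  have hfin : {i : Fin d | y i ≠ 0}.Finite := Set.toFinite _
  set Kf : Finset (Fin d) := hfin.toFinset with hKf
  have hcard : Kf.card ≤ k := by
    rw [hKf, ← Set.ncard_eq_toFinset_card _ hfin]
    exact hl0
  have hyK : y ∈ coordSubspace Kf := by
    intro j hj
    rw [hKf, Set.Finite.mem_toFinset] at hj
    simpa using hj
  calc dot x y = dot (proj Kf x) y := dot_left_proj hyK x
  _ ≤ N (proj Kf x) * dualNorm N y := dot_le_mul_dualNorm hN hom _ y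
  _ = N (proj Kf x) := by rw [hdual, mul_one]
  _ ≤ topNorm N k x := le_topNorm hcard x
  _ ≤ 1 := hx

lemma mem_convexHull_of_supportNorm_le {N : (Fin d → ℝ) → ℝ} (hN : IsNorm N)
    (hom : OrthantMonotonic N) {k : ℕ} (hk : 1 ≤ k) {y : Fin d → ℝ}
    (hy : supportNorm N k y ≤ 1) :
    y ∈ convexHull ℝ (⋃ K ∈ ((Finset.univ.filter
        (fun K : Finset (Fin d) => K.card ≤ k) : Finset (Finset (Fin d))) :
          Set (Finset (Fin d))),
      ({z : Fin d → ℝ | dualNorm N z ≤ 1} ∩ coordSubspace K)) := by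
  classical
  set S : Finset (Fin d) → Set (Fin d → ℝ) :=
    fun K => {z : Fin d → ℝ | dualNorm N z ≤ 1} ∩ coordSubspace K with hS
  set 𝒦 : Finset (Finset (Fin d)) :=
    Finset.univ.filter (fun K : Finset (Fin d) => K.card ≤ k) with h𝒦
  have hSc : ∀ K, IsCompact (S K) :=
    fun K => (dualBall_compact hN hom).of_isClosed_subset
      ((dualBall_closed hN hom).inter (coordSubspace_closed K)) Set.inter_subset_left
  have hSv : ∀ K, Convex ℝ (S K) :=
    fun K => (dualBall_convex hN hom).inter (coordSubspace_convex K)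
  have hSne : ∀ K, (S K).Nonempty := by
    intro K
    refine ⟨0, ?_, fun j _ => rfl⟩
    simp only [Set.mem_setOf_eq, dualNorm_zero hN]
    exact zero_le_one
  have hCompact := isCompact_convexHull_biUnion 𝒦 S hSc hSv hSne
  by_contra hnot
  obtain ⟨f, c, hfs, hfy⟩ :=
    geometric_hahn_banach_closed_point (convex_convexHull ℝ _) hCompact.isClosed hnot
  set w : Fin d → ℝ := fun i => f (Pi.single i 1) with hw
  have hfw : ∀ x, f x = dot x w := fun x => clm_eq_dot f x
  have hmem𝒦 : ∀ K : Finset (Fin d), K.card ≤ k → K ∈ 𝒦 := by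
    intro K hK
    rw [h𝒦, Finset.mem_filter]
    exact ⟨Finset.mem_univ K, hK⟩
  have hc : 0 < c := by
    have h0 : (0 : Fin d → ℝ) ∈ convexHull ℝ (⋃ K ∈ (𝒦 : Set (Finset (Fin d))), S K) := by
      apply subset_convexHull
      refine Set.mem_biUnion (show (∅ : Finset (Fin d)) ∈ (𝒦 : Set (Finset (Fin d))) from
        by exact_mod_cast hmem𝒦 ∅ (by simp)) ?_
      exact ⟨by rw [Set.mem_setOf_eq, dualNorm_zero hN]; exact zero_le_one, fun j _ => rfl⟩
    have := hfs 0 h0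
    simpa using this
  have htop : topNorm N k w ≤ c := by
    refine topNorm_le hc.le fun K hK => ?_
    refine proj_norm_le_of_dual_bound hN hom K w hc ?_
    intro z hz
    have hzA : z ∈ convexHull ℝ (⋃ K ∈ (𝒦 : Set (Finset (Fin d))), S K) :=
      subset_convexHull ℝ _ (Set.mem_biUnion (by exact_mod_cast hmem𝒦 K hK) hz)
    have := hfs z hzA
    rw [hfw] at this
    rw [dot_comm]
    exact this.le
  have htop' : topNorm N k (c⁻¹ • w) ≤ 1 := by
    rw [topNorm_smul hN, abs_inv, abs_of_pos hc, inv_mul_le_iff₀ hc, mul_one]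
    exact htop
  have hdot : 1 < dot (c⁻¹ • w) y := by
    rw [dot_smul_left]
    have hy' : c < dot w y := by
      have := hfy
      rw [hfw, dot_comm] at this
      exact this
    rw [lt_inv_mul_iff₀ hc]
    simpa using hy'
  have hle : dot (c⁻¹ • w) y ≤ supportNorm N k y :=
    dot_le_dualNorm (topNorm_isNorm hN hk) (topNorm_om hN hom k) y htop'
  linarith



/-- for an orthant-monotonic source norm whose dual normed space
is strictly convex, the intersection of the level set `{ℓ0 ≤ k}` with the dual
unit sphere equals the intersection of the unit ball of the generalized
k-support norm with the dual unit sphere (for `k = 0` the latter unit ball is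
understood as `{0}`). -/
theorem levelSet_l0_inter_dualSphere_eq_supportBall_inter_dualSphere
    (hd : 0 < d) (N : (Fin d → ℝ) → ℝ) (hN : IsNorm N)
    (hom : OrthantMonotonic N)
    (hsc : ∀ y : Fin d → ℝ, dualNorm N y = 1 →
      ExtremePt {z | dualNorm N z ≤ 1} y)
    (k : ℕ) (hk : k ≤ d) :
    {x : Fin d → ℝ | l0 x ≤ k} ∩ {y | dualNorm N y = 1} =
      (if k = 0 then ({0} : Set (Fin d → ℝ))
        else {y : Fin d → ℝ | supportNorm N k y ≤ 1})
      ∩ {y | dualNorm N y = 1} := by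
  classical
  ext y
  simp only [Set.mem_inter_iff, Set.mem_setOf_eq]
  by_cases hk0 : k = 0
  · subst hk0
    simp only [if_pos rfl, Set.mem_singleton_iff]
    constructor
    · rintro ⟨hl0, hdual⟩
      exfalso
      have hy0 : y = 0 := by
        have h0 : {i : Fin d | y i ≠ 0} = ∅ :=
          (Set.ncard_eq_zero (Set.toFinite _)).1 (Nat.le_zero.1 hl0)
        funext i
        by_contra hi
        exact absurd h0 (Set.nonempty_iff_ne_empty.1 ⟨i, hi⟩)
      rw [hy0, dualNorm_zero hN] at hdual
      norm_num at hdual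
    · rintro ⟨rfl, hdual⟩
      exfalso
      rw [dualNorm_zero hN] at hdual
      norm_num at hdual
  · have hk1 : 1 ≤ k := Nat.one_le_iff_ne_zero.2 hk0
    simp only [if_neg hk0, Set.mem_setOf_eq]
    constructor
    · rintro ⟨hl0, hdual⟩
      exact ⟨supportNorm_le_of_l0 hN hom hl0 hdual, hdual⟩
    · rintro ⟨hsupp, hdual⟩
      refine ⟨?_, hdual⟩
      have hmem := mem_convexHull_of_supportNorm_le hN hom hk1 hsupp
      set A : Set (Fin d → ℝ) := ⋃ K ∈ ((Finset.univ.filter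
          (fun K : Finset (Fin d) => K.card ≤ k) : Finset (Finset (Fin d))) :
            Set (Finset (Fin d))),
        ({z : Fin d → ℝ | dualNorm N z ≤ 1} ∩ coordSubspace K) with hA
      have hsubB : A ⊆ {z : Fin d → ℝ | dualNorm N z ≤ 1} := by
        intro z hz
        rw [hA, Set.mem_iUnion₂] at hz
        obtain ⟨K, _, hz1, _⟩ := hz
        exact hz1
      have hhull : convexHull ℝ A ⊆ {z : Fin d → ℝ | dualNorm N z ≤ 1} :=
        convexHull_min hsubB (dualBall_convex hN hom)
      have hext := hsc y hdual
      have hyext : y ∈ (convexHull ℝ A).extremePoints ℝ := by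
        refine ⟨hmem, ?_⟩
        rintro x₁ h₁ x₂ h₂ ⟨a, b, ha, hb, hab, heq⟩
        refine (hext.2 x₁ (hhull h₁) x₂ (hhull h₂) a ha (by linarith) ?_).1
        rw [show (1:ℝ) - a = b by linarith]
        exact heq.symm
      have hyA : y ∈ A := extremePoints_convexHull_subset hyext
      rw [hA, Set.mem_iUnion₂] at hyA
      obtain ⟨K, hK, _, hcs⟩ := hyA
      have hKcard : K.card ≤ k := by
        have := Finset.mem_coe.1 hK
        rw [Finset.mem_filter] at this
        exact this.2
      have hsub : {i : Fin d | y i ≠ 0} ⊆ (K : Set (Fin d)) := by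
        intro i hi
        by_contra hiK
        exact hi (hcs i (by simpa using hiK))
      calc l0 y ≤ Set.ncard (K : Set (Fin d)) := Set.ncard_le_ncard hsub (Set.toFinite _)
      _ = K.card := Set.ncard_coe_finset K
      _ ≤ k := hKcard


end OSMPaper
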